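/- Let α be a real number and for each real t set a(t) = 1 − α·i·t, b(t) = −1 + (2α−3/2)·i·t, c(t) = (1/2 − α)·i·t as complex numbers. Then the two Cohn–Schur conditions hold for all real t — namely |a(t)| ≥ |c(t)| and ||a(t)|² − |c(t)|²| ≥ |a(t)·conj(b(t)) − b(t)·conj(c(t))| — if and only if α ≥ 1/2. -/

import Mathlib

open Complex in
/-- Cohn–Schur conditions for the generalized AM2 scheme: with
a(t) = 1 − α·i·t, b(t) = −1 + (2α−3/2)·i·t, c(t) = (1/2 − α)·i·t,
the conditions |a| ≥ |c| and ||a|² − |c|²| ≥ |a·conj(b) − b·conj(c)| hold for all real t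
if and only if α ≥ 1/2. -/
theorem generalized_AM2_CohnSchur_iff (α : ℝ) :
    (∀ t : ℝ,
      ‖1 - (α : ℂ) * Complex.I * (t : ℂ)‖
          ≥ ‖(1/2 - (α : ℂ)) * Complex.I * (t : ℂ)‖ ∧
      |‖1 - (α : ℂ) * Complex.I * (t : ℂ)‖ ^ 2
          - ‖(1/2 - (α : ℂ)) * Complex.I * (t : ℂ)‖ ^ 2|
        ≥ ‖
            ((1 - (α : ℂ) * Complex.I * (t : ℂ))
                * (starRingEnd ℂ) (-1 + (2 * (α : ℂ) - 3/2) * Complex.I * (t : ℂ))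
              - (-1 + (2 * (α : ℂ) - 3/2) * Complex.I * (t : ℂ))
                * (starRingEnd ℂ) ((1/2 - (α : ℂ)) * Complex.I * (t : ℂ)))‖)
    ↔ α ≥ 1/2 := by
  have e1 : ∀ t : ℝ, (1 - (α:ℂ)*I*t) = ((1:ℝ):ℂ) + ((-(α*t):ℝ):ℂ)*I := by
    intro t; push_cast; ring
  have e2 : ∀ t : ℝ, ((1/2-(α:ℂ))*I*t) = ((0:ℝ):ℂ) + (((1/2-α)*t : ℝ):ℂ)*I := by
    intro t; push_cast; ring
  have e3 : ∀ t : ℝ, (1 - (α:ℂ)*I*t) * (starRingEnd ℂ) (-1 + (2*(α:ℂ)-3/2)*I*t)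
      - (-1 + (2*(α:ℂ)-3/2)*I*t) * (starRingEnd ℂ) ((1/2-(α:ℂ))*I*t)
      = ((-1 - (α-3/4)*t^2 : ℝ):ℂ) + ((t:ℝ):ℂ)*I := by
    intro t
    simp only [map_add, map_sub, map_neg, map_mul, map_one, map_div₀, map_ofNat,
      Complex.conj_I, Complex.conj_ofReal]
    push_cast
    ring_nf
    rw [Complex.I_sq]; ring
  have n1 : ∀ t : ℝ, Complex.normSq (1 - (α:ℂ)*I*t) = 1 + α^2*t^2 := by
    intro t; rw [e1 t, Complex.normSq_add_mul_I]; ring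
  have n2 : ∀ t : ℝ, Complex.normSq ((1/2-(α:ℂ))*I*t) = (1/2-α)^2*t^2 := by
    intro t; rw [e2 t, Complex.normSq_add_mul_I]; ring
  have n3 : ∀ t : ℝ, Complex.normSq ((1 - (α:ℂ)*I*t) * (starRingEnd ℂ) (-1 + (2*(α:ℂ)-3/2)*I*t)
      - (-1 + (2*(α:ℂ)-3/2)*I*t) * (starRingEnd ℂ) ((1/2-(α:ℂ))*I*t))
      = (1 + (α-3/4)*t^2)^2 + t^2 := by
    intro t; rw [e3 t, Complex.normSq_add_mul_I]; ring
  constructor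
  · intro h
    have h2 := (h 1).2
    rw [ge_iff_le, Complex.sq_norm, Complex.sq_norm, ← Real.sqrt_sq_eq_abs, Complex.norm_def,
      Real.sqrt_le_sqrt_iff (sq_nonneg _)] at h2
    rw [n1, n2, n3] at h2
    nlinarith [h2]
  · intro hα t
    constructor
    · rw [ge_iff_le, Complex.norm_def, Complex.norm_def,
        Real.sqrt_le_sqrt_iff (Complex.normSq_nonneg _), n1, n2]
      nlinarith [sq_nonneg t, sq_nonneg α]
    · rw [ge_iff_le, Complex.sq_norm, Complex.sq_norm, ← Real.sqrt_sq_eq_abs, Complex.norm_def,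
        Real.sqrt_le_sqrt_iff (sq_nonneg _), n1, n2, n3]
      nlinarith [sq_nonneg (t^2), sq_nonneg t, mul_nonneg (sub_nonneg.2 hα) (sq_nonneg (t^2))]
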